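/- For a mean-ES mixture risk measure ρ(Z) = p ES_α(Z) + (1-p) E[Z] with p ∈ (0,1), the triplet (VaR_α, ES_α, ρ) is jointly elicitable: the scoring function S_ρ(z_1, z_2, z_3, y) = S_{VaR,ES}(z_1, z_2, y) + S_E((z_3 - p z_2)/(1-p), y) is strictly consistent for (VaR_α, ES_α, ρ) on the class of distributions with unique α-quantile and suitable integrability, where S_{VaR,ES} is a strictly consistent score for (VaR_α, ES_α) and S_E is a strictly consistent score for the mean. -/

import Mathlib

open MeasureTheory

/-- `S` is a strictly consistent scoring function for the functional `T` on the class `M`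
of laws on `ℝ`: `T(F)` minimises the expected score, and is its unique minimiser. -/
def StrictlyConsistent {α : Type*} (M : Set (Measure ℝ)) (S : α → ℝ → ℝ)
    (T : Measure ℝ → α) : Prop :=
  ∀ F ∈ M, ∀ z : α,
    (∫ y, S (T F) y ∂F) ≤ (∫ y, S z y ∂F) ∧
    ((∫ y, S z y ∂F) = (∫ y, S (T F) y ∂F) → z = T F)

/-- Joint elicitability of `(VaR_α, ES_α, ρ)` for the mean-ES mixture
`ρ(F) = p ES_α(F) + (1-p) E_F[Y]`, via the scoring function
`S_ρ(z₁, z₂, z₃, y) = S_{VaR,ES}(z₁, z₂, y) + S_E((z₃ - p z₂)/(1-p), y)`. -/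
theorem stmt9 (M : Set (Measure ℝ)) (p : ℝ) (hp : p ∈ Set.Ioo (0 : ℝ) 1)
    (VaR ES mean : Measure ℝ → ℝ)
    (SVE : ℝ × ℝ → ℝ → ℝ) (SE : ℝ → ℝ → ℝ)
    (hSVE : StrictlyConsistent M SVE fun F => (VaR F, ES F))
    (hSE : StrictlyConsistent M SE mean)
    -- suitable integrability of the scores
    (hintVE : ∀ F ∈ M, ∀ z : ℝ × ℝ, Integrable (fun y => SVE z y) F)
    (hintE : ∀ F ∈ M, ∀ z : ℝ, Integrable (fun y => SE z y) F) :
    StrictlyConsistent M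
      (fun z : ℝ × ℝ × ℝ => fun y => SVE (z.1, z.2.1) y + SE ((z.2.2 - p * z.2.1) / (1 - p)) y)
      (fun F => (VaR F, ES F, p * ES F + (1 - p) * mean F)) := by
  intro F hF z
  have hp1 : (1 : ℝ) - p ≠ 0 := by have := hp.2; linarith
  have hTmean : ((p * ES F + (1 - p) * mean F) - p * ES F) / (1 - p) = mean F := by
    field_simp
    ring
  have hsplit : ∀ w : ℝ × ℝ × ℝ,
      (∫ y, SVE (w.1, w.2.1) y + SE ((w.2.2 - p * w.2.1) / (1 - p)) y ∂F)
        = (∫ y, SVE (w.1, w.2.1) y ∂F) + ∫ y, SE ((w.2.2 - p * w.2.1) / (1 - p)) y ∂F := by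
    intro w
    exact integral_add (hintVE F hF _) (hintE F hF _)
  have h1 := hSVE F hF (z.1, z.2.1)
  have h2 := hSE F hF ((z.2.2 - p * z.2.1) / (1 - p))
  beta_reduce at h1 h2 ⊢
  rw [hsplit z, hsplit (VaR F, ES F, p * ES F + (1 - p) * mean F)]
  simp only [hTmean]
  constructor
  · exact add_le_add h1.1 h2.1
  · intro heq
    have hle1 := h1.1
    have hle2 := h2.1
    have e1 : (∫ y, SVE (z.1, z.2.1) y ∂F) = ∫ y, SVE (VaR F, ES F) y ∂F := by linarith
    have e2 : (∫ y, SE ((z.2.2 - p * z.2.1) / (1 - p)) y ∂F) = ∫ y, SE (mean F) y ∂F := by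
      linarith
    have hz1 := h1.2 e1
    have hz2 := h2.2 e2
    have hz11 : z.1 = VaR F := congrArg Prod.fst hz1
    have hz12 : z.2.1 = ES F := congrArg Prod.snd hz1
    have hz3 : z.2.2 = p * ES F + (1 - p) * mean F := by
      have : (z.2.2 - p * z.2.1) / (1 - p) = mean F := hz2
      rw [hz12] at this
      field_simp at this
      linarith
    exact Prod.ext hz11 (Prod.ext hz12 hz3)
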